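/- For every β > 0 and every θ > 0, the function θ ↦ (1/θ)·log r(θ) is differentiable at θ with derivative equal to −f(θβ)/θ². Consequently this derivative is negative when f(θβ) > 0, zero when f(θβ) = 0, and positive when f(θβ) < 0. -/

import Mathlib

open MeasureTheory Real

/-- The Laplace transform `λ_β = 𝔼[e^{-βX}]` of the conductance law. -/
noncomputable def lam {Ω : Type*} [MeasurableSpace Ω] (P : Measure Ω) (X : Ω → ℝ) (β : ℝ) : ℝ :=
  ∫ ω, Real.exp (-β * X ω) ∂P

/-- The annealed critical point `h_a(β) = log(ℓ-1) + log λ_β`. -/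
noncomputable def annealedCP {Ω : Type*} [MeasurableSpace Ω] (P : Measure Ω) (X : Ω → ℝ)
    (ℓ : ℕ) (β : ℝ) : ℝ :=
  Real.log ((ℓ : ℝ) - 1) + Real.log (lam P X β)

/-- The function `f(β) = h_a(β) + β·𝔼[X e^{-βX}]/λ_β  (= h_a(β) - β h_a'(β))`. -/
noncomputable def fDS {Ω : Type*} [MeasurableSpace Ω] (P : Measure Ω) (X : Ω → ℝ)
    (ℓ : ℕ) (β : ℝ) : ℝ :=
  annealedCP P X ℓ β + β * (∫ ω, X ω * Real.exp (-β * X ω) ∂P) / lam P X β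


/-- The fractional-moment rate `r(θ) = (ℓ-1)·𝔼[(e^{-βX}/((ℓ-1)λ_β))^θ]`. -/
noncomputable def rDS {Ω : Type*} [MeasurableSpace Ω] (P : Measure Ω) (X : Ω → ℝ)
    (ℓ : ℕ) (β θ : ℝ) : ℝ :=
  ((ℓ : ℝ) - 1) * ∫ ω, (Real.exp (-β * X ω) / (((ℓ : ℝ) - 1) * lam P X β)) ^ θ ∂P

lemma abs_le_exp_add_exp (x : ℝ) : |x| ≤ Real.exp x + Real.exp (-x) := by
  rcases abs_cases x with ⟨h, _⟩ | ⟨h, _⟩ <;>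
    nlinarith [Real.add_one_le_exp x, Real.add_one_le_exp (-x), Real.exp_pos x, Real.exp_pos (-x)]

/-- Derivative of the Laplace transform. -/
lemma lam_hasDerivAt {Ω : Type*} [MeasurableSpace Ω] (P : Measure Ω)
    [IsProbabilityMeasure P] (X : Ω → ℝ) (hX : Measurable X)
    (hInt : ∀ s : ℝ, Integrable (fun ω => Real.exp (-s * X ω)) P) (s : ℝ) :
    Integrable (fun ω => X ω * Real.exp (-s * X ω)) P ∧
      HasDerivAt (lam P X) (-∫ ω, X ω * Real.exp (-s * X ω) ∂P) s := by
  set F : ℝ → Ω → ℝ := fun t ω => Real.exp (-t * X ω) with hF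
  set F' : ℝ → Ω → ℝ := fun t ω => -(X ω) * Real.exp (-t * X ω) with hF'
  set bound : Ω → ℝ := fun ω =>
    Real.exp (-(s - 2) * X ω) + Real.exp (-s * X ω) +
      (Real.exp (-s * X ω) + Real.exp (-(s + 2) * X ω)) with hbound
  have hmeas : ∀ t : ℝ, AEStronglyMeasurable (F t) P := fun t =>
    ((hX.const_mul (-t)).exp).aestronglyMeasurable
  have hmeas' : AEStronglyMeasurable (F' s) P :=
    (hX.neg.mul (hX.const_mul (-s)).exp).aestronglyMeasurable
  have hboundInt : Integrable bound P :=
    (((hInt (s - 2)).add (hInt s)).add ((hInt s).add (hInt (s + 2))))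
  have h_bound : ∀ᵐ ω ∂P, ∀ t ∈ Metric.ball s 1, ‖F' t ω‖ ≤ bound ω := by
    refine Filter.Eventually.of_forall fun ω t ht => ?_
    have ht' : |t - s| < 1 := by simpa [Real.dist_eq] using ht
    obtain ⟨h1, h2⟩ := abs_lt.mp ht'
    set x := X ω
    have hxabs : |x| ≤ Real.exp x + Real.exp (-x) := abs_le_exp_add_exp x
    have hexp : Real.exp (-t * x) ≤ Real.exp (-(s - 1) * x) + Real.exp (-(s + 1) * x) := by
      rcases le_or_gt 0 x with hx | hx
      · have : -t * x ≤ -(s - 1) * x := by nlinarith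
        calc Real.exp (-t * x) ≤ Real.exp (-(s - 1) * x) := Real.exp_le_exp.mpr this
          _ ≤ _ := le_add_of_nonneg_right (Real.exp_pos _).le
      · have : -t * x ≤ -(s + 1) * x := by nlinarith
        calc Real.exp (-t * x) ≤ Real.exp (-(s + 1) * x) := Real.exp_le_exp.mpr this
          _ ≤ _ := le_add_of_nonneg_left (Real.exp_pos _).le
    have h3 : ‖F' t ω‖ = |x| * Real.exp (-t * x) := by
      simp [hF', abs_mul, Real.abs_exp]
      rfl
    rw [h3]
    calc |x| * Real.exp (-t * x)
        ≤ (Real.exp x + Real.exp (-x)) * (Real.exp (-(s - 1) * x) + Real.exp (-(s + 1) * x)) := by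
          apply mul_le_mul hxabs hexp (Real.exp_pos _).le
          positivity
      _ = bound ω := by
          simp only [hbound, add_mul, mul_add, ← Real.exp_add]
          congr 2 <;> · congr 1; ring
  have h_diff : ∀ᵐ ω ∂P, ∀ t ∈ Metric.ball s 1, HasDerivAt (fun u => F u ω) (F' t ω) t := by
    refine Filter.Eventually.of_forall fun ω t _ => ?_
    have h := ((hasDerivAt_id t).neg.mul_const (X ω)).exp
    convert h using 1
    all_goals simp only [hF, hF', Pi.neg_apply, id_eq]
    ring
  have := hasDerivAt_integral_of_dominated_loc_of_deriv_le (Metric.ball_mem_nhds s one_pos)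
    (Filter.Eventually.of_forall hmeas) (hInt s) hmeas' h_bound hboundInt h_diff
  refine ⟨?_, ?_⟩
  · have h1 := this.1
    have : (fun ω => X ω * Real.exp (-s * X ω)) = fun ω => -(F' s ω) := by
      funext ω; simp [hF']
    rw [this]
    exact h1.neg
  · have h2 := this.2
    have heq : ∫ ω, F' s ω ∂P = -∫ ω, X ω * Real.exp (-s * X ω) ∂P := by
      rw [← integral_neg]
      congr 1; funext ω; simp [hF']
    rw [heq] at h2
    exact h2

/-- For `β > 0` and `θ > 0`, `θ ↦ (1/θ)·log r(θ)` is differentiable at `θ` with derivative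
`-f(θβ)/θ²`, which is negative, zero, or positive according to the sign of `f(θβ)`. -/
theorem hasDerivAt_inv_log_rDS {Ω : Type*} [MeasurableSpace Ω] (P : Measure Ω)
    [IsProbabilityMeasure P] (X : Ω → ℝ) (hX : Measurable X)
    (hInt : ∀ s : ℝ, Integrable (fun ω => Real.exp (-s * X ω)) P)
    (ℓ : ℕ) (hℓ : 3 ≤ ℓ) :
    ∀ β : ℝ, 0 < β → ∀ θ : ℝ, 0 < θ →
      HasDerivAt (fun t => (1 / t) * Real.log (rDS P X ℓ β t))
        (-(fDS P X ℓ (θ * β)) / θ ^ 2) θ ∧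
      (0 < fDS P X ℓ (θ * β) → -(fDS P X ℓ (θ * β)) / θ ^ 2 < 0) ∧
      (fDS P X ℓ (θ * β) = 0 → -(fDS P X ℓ (θ * β)) / θ ^ 2 = 0) ∧
      (fDS P X ℓ (θ * β) < 0 → 0 < -(fDS P X ℓ (θ * β)) / θ ^ 2) := by
  intro β hβ θ hθ
  have hθ2 : (0 : ℝ) < θ ^ 2 := by positivity
  have hℓ3 : (3 : ℝ) ≤ (ℓ : ℝ) := by exact_mod_cast hℓ
  have hℓpos : (0 : ℝ) < (ℓ : ℝ) - 1 := by linarith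
  have hlampos : ∀ s : ℝ, 0 < lam P X s := fun s => integral_exp_pos (hInt s)
  set c : ℝ := ((ℓ : ℝ) - 1) * lam P X β with hc
  have hcpos : 0 < c := mul_pos hℓpos (hlampos β)
  set A : ℝ := Real.log ((ℓ : ℝ) - 1) with hA
  set Lc : ℝ := Real.log c with hLc
  -- rewrite rDS
  have hrDS : ∀ t : ℝ, rDS P X ℓ β t = ((ℓ : ℝ) - 1) * (lam P X (t * β) * ((c : ℝ) ^ t)⁻¹) := by
    intro t
    have hpt : ∀ ω : Ω, (Real.exp (-β * X ω) / c) ^ t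
        = Real.exp (-(t * β) * X ω) * ((c : ℝ) ^ t)⁻¹ := by
      intro ω
      rw [Real.div_rpow (Real.exp_pos _).le hcpos.le, ← Real.exp_mul, div_eq_mul_inv]
      congr 2
      ring
    unfold rDS
    rw [show (∫ ω, (Real.exp (-β * X ω) / (((ℓ : ℝ) - 1) * lam P X β)) ^ t ∂P)
        = ∫ ω, Real.exp (-(t * β) * X ω) * ((c : ℝ) ^ t)⁻¹ ∂P from by
      congr 1; funext ω; exact hpt ω]
    rw [integral_mul_const]
    unfold lam
    ring
  have hfun : (fun t => (1 / t) * Real.log (rDS P X ℓ β t))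
      = fun t => t⁻¹ * (A + -t * Lc + Real.log (lam P X (t * β))) := by
    funext t
    have hct : (0 : ℝ) < (c : ℝ) ^ t := Real.rpow_pos_of_pos hcpos t
    rw [hrDS t, Real.log_mul hℓpos.ne' (mul_pos (hlampos _) (inv_pos.mpr hct)).ne',
      Real.log_mul (hlampos _).ne' (inv_pos.mpr hct).ne', Real.log_inv,
      Real.log_rpow hcpos, one_div, hA, hLc]
    ring
  obtain ⟨hmInt, hlamDeriv⟩ := lam_hasDerivAt P X hX hInt (θ * β)
  set lamθ : ℝ := lam P X (θ * β) with hlamθ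
  set m : ℝ := ∫ ω, X ω * Real.exp (-(θ * β) * X ω) ∂P with hm
  have hcomp : HasDerivAt (fun t => lam P X (t * β)) (-m * β) θ := by
    have h := hlamDeriv.comp θ (hasDerivAt_mul_const β)
    exact h
  have hlog : HasDerivAt (fun t => Real.log (lam P X (t * β))) ((-m * β) / lamθ) θ :=
    hcomp.log (hlampos _).ne'
  have hprod := (hasDerivAt_inv hθ.ne').mul
    (((hasDerivAt_const θ A).add ((hasDerivAt_id θ).neg.mul_const Lc)).add hlog)
  have hval : -(fDS P X ℓ (θ * β)) / θ ^ 2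
      = -(θ ^ 2)⁻¹ * (A + -θ * Lc + Real.log lamθ)
        + θ⁻¹ * (0 + -1 * Lc + -m * β / lamθ) := by
    unfold fDS annealedCP
    rw [← hlamθ, ← hm, ← hA]
    field_simp
    ring
  have hderiv : HasDerivAt (fun t => (1 / t) * Real.log (rDS P X ℓ β t))
      (-(fDS P X ℓ (θ * β)) / θ ^ 2) θ := by
    rw [hfun, hval]
    exact hprod
  refine ⟨hderiv, fun h => ?_, fun h => by simp [h], fun h => div_pos (by linarith) hθ2⟩
  exact div_neg_of_neg_of_pos (by linarith) hθ2
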